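/- arXiv:2308.10676 — 3 statements merged into one kernel-verified Lean document; each statement's English description precedes it below -/
import Mathlib

section
/- Let (Σ,P) be a Kelvin–Planck theory with set T_CD of Clausius–Duhem temperature scales, let Σ⁰ ⊆ Σ, and let T⁰_CD be the set of restrictions of members of T_CD to Σ⁰. The following are equivalent: (i) all members of T⁰_CD are positive multiples of some fixed one; (ii) for each pair of distinct states σ', σ ∈ Σ⁰ there is a Carnot element of (Σ,P) operating between them. -/
open Set

noncomputable section

/-- Signed regular Borel measures on `X`, modeled via the Riesz representation
theorem as the weak-star dual of `C(X, ℝ)`. -/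
abbrev Meas (X : Type*) [TopologicalSpace X] := WeakDual ℝ C(X, ℝ)

/-- The ambient space containing `V(X) = M°(X) ⊕ M(X)`; membership in the
subspace `M°(X)` of the first component is expressed by `p.1 1 = 0`. -/
abbrev VSp (X : Type*) [TopologicalSpace X] := Meas X × Meas X

/-- The cone of nonnegative measures. -/
def PosMeas (X : Type*) [TopologicalSpace X] : Set (Meas X) :=
  {μ | ∀ f : C(X, ℝ), (∀ x, 0 ≤ f x) → 0 ≤ μ f}

variable {X : Type*} [TopologicalSpace X]

/-- The Dirac measure at a point, i.e. the evaluation functional. -/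
def dirac (x : X) : Meas X :=
  (⟨⟨⟨fun f => f x, fun _ _ => rfl⟩, fun _ _ => rfl⟩,
    continuous_eval_const x⟩ : C(X, ℝ) →L[ℝ] ℝ)

/-- The set of nonnegative multiples of members of `P`. -/
def coneOf (P : Set (VSp X)) : Set (VSp X) :=
  {x | ∃ c : ℝ, 0 ≤ c ∧ ∃ p ∈ P, x = c • p}

/-- `\hat P`, the weak-star closure of the cone generated by `P`. -/
def hatP (P : Set (VSp X)) : Set (VSp X) :=
  closure (coneOf P)

/-- A thermodynamical theory: processes have change of condition with total mass
zero (i.e. `P ⊆ V(X)`), and `\hat P` is convex. -/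
def IsThermoTheory (P : Set (VSp X)) : Prop :=
  (∀ p ∈ P, p.1 (1 : C(X, ℝ)) = 0) ∧ Convex ℝ (hatP P)

/-- A Kelvin–Planck theory: a thermodynamical theory with
`\hat P ∩ ({0} × M₊(X)) = {(0,0)}`. -/
def IsKelvinPlanck (P : Set (VSp X)) : Prop :=
  IsThermoTheory P ∧ hatP P ∩ (({0} : Set (Meas X)) ×ˢ PosMeas X) = {(0, 0)}

/-- A Clausius–Duhem pair `(η, T)` for the theory `P`: `η` and `T` are continuous,
`T` is strictly positive, and for every continuous `β` equal pointwise to `1/T`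
(such a `β` exists, and is unique, by positivity of `T`), the Clausius–Duhem
inequality `∫ η d(Δm) ≥ ∫ (1/T) dq` holds for every process in `P`. -/
def IsCDPair (P : Set (VSp X)) (η T : C(X, ℝ)) : Prop :=
  (∀ x, 0 < T x) ∧
    ∀ β : C(X, ℝ), (∀ x, β x = (T x)⁻¹) → ∀ p ∈ P, p.2 β ≤ p.1 η

/-- A Clausius–Duhem temperature scale. -/
def IsCDTemp (P : Set (VSp X)) (T : C(X, ℝ)) : Prop :=
  ∃ η : C(X, ℝ), IsCDPair P η T

/-- Two states are of the same hotness: both `(0, δ_a − δ_b)` and `(0, δ_b − δ_a)`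
belong to `\hat P`. -/
def SameHotness (P : Set (VSp X)) (a b : X) : Prop :=
  ((0 : Meas X), dirac a - dirac b) ∈ hatP P ∧
    ((0 : Meas X), dirac b - dirac a) ∈ hatP P

/-- The hotness level of a state. -/
def hotnessLevel (P : Set (VSp X)) (a : X) : Set X :=
  {b | SameHotness P a b}

/-- A subset of the state space that is a hotness level. -/
def IsHotnessLevel (P : Set (VSp X)) (h : Set X) : Prop :=
  ∃ a : X, h = hotnessLevel P a

/-- The (signed) measure `μ` is supported in the set `A`: `μ` annihilates every
continuous function vanishing on `A`. -/
def SuppIn (μ : Meas X) (A : Set X) : Prop :=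
  ∀ f : C(X, ℝ), (∀ x ∈ A, f x = 0) → μ f = 0

/-- `\hat Q` contains a passive heat transfer from hotness level `h` to `h'`:
an element `(0, μ − μ')` of `\hat Q` with `μ, μ'` nonnegative, `supp μ ⊆ h`,
`supp μ' ⊆ h'` and `μ(h) = μ'(h') > 0` (the common value being the total mass). -/
def IsPassiveHT (Q : Set (VSp X)) (h h' : Set X) : Prop :=
  ∃ μ μ' : Meas X, μ ∈ PosMeas X ∧ μ' ∈ PosMeas X ∧ SuppIn μ h ∧ SuppIn μ' h' ∧
    μ (1 : C(X, ℝ)) = μ' (1 : C(X, ℝ)) ∧ 0 < μ (1 : C(X, ℝ)) ∧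
    ((0 : Meas X), μ - μ') ∈ hatP Q

/-- Hotness level `h'` is hotter than `h`: the levels are distinct and every
thermodynamical theory whose closed process cone contains `P` together with a
passive heat transfer from `h` to `h'` fails to be a Kelvin–Planck theory. -/
def Hotter (P : Set (VSp X)) (h' h : Set X) : Prop :=
  h' ≠ h ∧ ∀ Pd : Set (VSp X), IsThermoTheory Pd → P ⊆ hatP Pd →
    IsPassiveHT Pd h h' → ¬ IsKelvinPlanck Pd

/-- State `a` is hotter than state `b`. -/
def HotterState (P : Set (VSp X)) (a b : X) : Prop :=
  Hotter P (hotnessLevel P a) (hotnessLevel P b)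

/-- A Carnot element of the theory `P` operating between hotness levels `h'` and
`h`: a reversible cyclic element `(0, μ' − μ)` with `μ', μ` nonzero nonnegative
measures supported in `h'`, `h` respectively. -/
def IsCarnotBetween (P : Set (VSp X)) (h' h : Set X) (p : VSp X) : Prop :=
  p ∈ hatP P ∧ -p ∈ hatP P ∧
    ∃ μ' μ : Meas X, μ' ∈ PosMeas X ∧ μ ∈ PosMeas X ∧ μ' ≠ 0 ∧ μ ≠ 0 ∧
      SuppIn μ' h' ∧ SuppIn μ h ∧ p = ((0 : Meas X), μ' - μ)

end

noncomputable section ThermoAux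

open Set Filter Topology

section Duality

variable {E : Type*} [AddCommGroup E] [Module ℝ E] [TopologicalSpace E]

/-- Evaluation as a linear map on the weak dual. -/
def evalLM (e : E) : WeakDual ℝ E →ₗ[ℝ] ℝ where
  toFun μ := μ e
  map_add' _ _ := rfl
  map_smul' _ _ := rfl

theorem weakDual_dual_eval (K : WeakDual ℝ E →ₗ[ℝ] ℝ) (hK : Continuous K) :
    ∃ e : E, ∀ μ : WeakDual ℝ E, K μ = μ e := by
  classical
  have hinj : Function.Injective (topDualPairing ℝ E) := by
    intro f g h
    ext x
    have := LinearMap.ext_iff.1 h x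
    simpa [topDualPairing_apply] using this
  have hemb := WeakBilin.isEmbedding (B := topDualPairing ℝ E) hinj
  set F : WeakDual ℝ E → E → ℝ := fun x y => topDualPairing ℝ E x y with hF
  have hnhds : 𝓝 (0 : WeakDual ℝ E) = comap F (𝓝 (F 0)) := hemb.toIsInducing.nhds_eq_comap 0
  have hball : K ⁻¹' (Metric.ball (0:ℝ) 1) ∈ 𝓝 (0 : WeakDual ℝ E) :=
    (Metric.isOpen_ball.preimage hK).mem_nhds (by simp [K.map_zero])
  rw [hnhds, mem_comap] at hball
  obtain ⟨S, hS, hSsub⟩ := hball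
  have hF0 : F 0 = (0 : E → ℝ) := by funext y; simp [hF, topDualPairing_apply]; rfl
  rw [hF0, nhds_pi, Filter.mem_pi] at hS
  obtain ⟨I, hIfin, t, ht, htsub⟩ := hS
  have hker : ∀ μ : WeakDual ℝ E, (∀ e ∈ I, μ e = 0) → K μ = 0 := by
    intro μ hμ
    by_contra hne
    have hmem : ∀ c : ℝ, |c| * |K μ| < 1 := by
      intro c
      have h1 : F (c • μ) ∈ I.pi t := by
        intro e he
        have h2 : F (c • μ) e = 0 := by
          show (c • μ) e = 0
          have : (c • μ) e = c * μ e := rfl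
          rw [this, hμ e he, mul_zero]
        rw [h2]
        exact mem_of_mem_nhds (by simpa using ht e)
      have := hSsub (htsub h1)
      simpa [Real.dist_eq, abs_mul] using this
    have h2 := hmem (2 * (K μ)⁻¹)
    have h3 : |(2:ℝ) * (K μ)⁻¹| * |K μ| = 2 := by
      rw [abs_mul, abs_inv, abs_two, mul_assoc, inv_mul_cancel₀ (abs_ne_zero.2 hne), mul_one]
    rw [h3] at h2
    norm_num at h2
  have : Finite I := hIfin.to_subtype
  have hle : (⨅ i : I, LinearMap.ker (evalLM (i : E))) ≤ LinearMap.ker K := by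
    intro μ hμ
    rw [Submodule.mem_iInf] at hμ
    exact hker μ fun e he => hμ ⟨e, he⟩
  have hspan := mem_span_of_iInf_ker_le_ker (L := fun i : I => evalLM (i : E)) (K := K) hle
  have := Fintype.ofFinite I
  obtain ⟨c, hc⟩ := (Submodule.mem_span_range_iff_exists_fun ℝ).1 hspan
  refine ⟨∑ i : I, c i • (i : E), fun μ => ?_⟩
  have := LinearMap.ext_iff.1 hc μ
  rw [← this, map_sum]
  simp only [LinearMap.coe_sum, Finset.sum_apply, LinearMap.smul_apply, smul_eq_mul]
  refine Finset.sum_congr rfl fun i _ => ?_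
  rw [map_smul]
  rfl

end Duality

variable {X : Type*} [TopologicalSpace X]

instance : LocallyConvexSpace ℝ (Meas X) :=
  WeakBilin.locallyConvexSpace (B := topDualPairing ℝ C(X,ℝ))

/-- Evaluation as a continuous linear map on the space of measures. -/
def evalCLM (g : C(X, ℝ)) : Meas X →L[ℝ] ℝ :=
  ⟨evalLM g, WeakDual.eval_continuous g⟩

/-- The entropy–temperature functional associated with `(η, β)`. -/
def funcOf (η β : C(X, ℝ)) : VSp X →L[ℝ] ℝ :=
  ((evalCLM η).comp (ContinuousLinearMap.fst ℝ (Meas X) (Meas X))) -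
    ((evalCLM β).comp (ContinuousLinearMap.snd ℝ (Meas X) (Meas X)))

theorem funcOf_apply (η β : C(X, ℝ)) (p : VSp X) : funcOf η β p = p.1 η - p.2 β := rfl

/-- Every continuous linear functional on `VSp X` is given by a pair of
continuous functions. -/
theorem decompose_functional (f : VSp X →L[ℝ] ℝ) :
    ∃ η γ : C(X, ℝ), ∀ p : VSp X, f p = p.1 η + p.2 γ := by
  obtain ⟨η, hη⟩ := weakDual_dual_eval
    (f.comp (ContinuousLinearMap.inl ℝ (Meas X) (Meas X))).toLinearMap
    (f.comp (ContinuousLinearMap.inl ℝ (Meas X) (Meas X))).continuous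
  obtain ⟨γ, hγ⟩ := weakDual_dual_eval
    (f.comp (ContinuousLinearMap.inr ℝ (Meas X) (Meas X))).toLinearMap
    (f.comp (ContinuousLinearMap.inr ℝ (Meas X) (Meas X))).continuous
  refine ⟨η, γ, fun p => ?_⟩
  have hp : p = (p.1, (0 : Meas X)) + ((0 : Meas X), p.2) := by
    ext <;> simp
  calc f p = f ((p.1, (0 : Meas X)) + ((0 : Meas X), p.2)) := by rw [← hp]
    _ = f (p.1, (0 : Meas X)) + f ((0 : Meas X), p.2) := map_add f _ _
    _ = p.1 η + p.2 γ := by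
        rw [← hη p.1, ← hγ p.2]; rfl

theorem subset_hatP (P : Set (VSp X)) : P ⊆ hatP P := fun p hp =>
  subset_closure ⟨1, zero_le_one, p, hp, (one_smul ℝ p).symm⟩

theorem smul_mem_hatP {P : Set (VSp X)} {c : ℝ} (hc : 0 ≤ c) {p : VSp X}
    (hp : p ∈ hatP P) : c • p ∈ hatP P := by
  have h1 : (c • ·) '' coneOf P ⊆ coneOf P := by
    rintro - ⟨q, ⟨c', hc', r, hr, rfl⟩, rfl⟩
    exact ⟨c * c', mul_nonneg hc hc', r, hr, smul_smul c c' r⟩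
  have h2 := image_closure_subset_closure_image (s := coneOf P)
    (continuous_const_smul c)
  exact closure_mono h1 (h2 ⟨p, hp, rfl⟩)

theorem nonneg_on_hatP {P : Set (VSp X)} (f : VSp X →L[ℝ] ℝ)
    (h : ∀ p ∈ P, 0 ≤ f p) : ∀ p ∈ hatP P, 0 ≤ f p := by
  have h1 : coneOf P ⊆ f ⁻¹' Ici 0 := by
    rintro - ⟨c, hc, q, hq, rfl⟩
    have : f (c • q) = c * f q := by rw [map_smul]; rfl
    simpa [this] using mul_nonneg hc (h q hq)
  have h2 : IsClosed (f ⁻¹' Ici 0) := isClosed_Ici.preimage f.continuous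
  exact fun p hp => closure_minimal h1 h2 hp

theorem zero_mem_hatP {P : Set (VSp X)} (hP : IsKelvinPlanck P) :
    ((0, 0) : VSp X) ∈ hatP P := by
  have h : (((0 : Meas X), (0 : Meas X)) : VSp X) ∈
      ({((0 : Meas X), (0 : Meas X))} : Set (VSp X)) := rfl
  rw [← hP.2] at h
  exact h.1

theorem nonneg_of_sep {P : Set (VSp X)} (hP : IsKelvinPlanck P)
    (f : VSp X →L[ℝ] ℝ) (w : ℝ) (h3 : ∀ b ∈ hatP P, w < f b) :
    w < 0 ∧ ∀ b ∈ hatP P, 0 ≤ f b := by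
  have hw : w < 0 := by
    have := h3 _ (zero_mem_hatP hP)
    rwa [Prod.mk_zero_zero, map_zero] at this
  refine ⟨hw, fun b hb => ?_⟩
  by_contra hneg
  push_neg at hneg
  have hc : (0:ℝ) ≤ (w - 1) / f b := (div_pos_of_neg_of_neg (by linarith : w - 1 < 0) hneg).le
  have hmem := smul_mem_hatP hc hb
  have := h3 _ hmem
  have heq : f (((w - 1) / f b) • b) = w - 1 := by
    rw [map_smul]
    show ((w - 1) / f b) * f b = w - 1
    exact div_mul_cancel₀ _ (by linarith)
  rw [heq] at this
  linarith

/-- The set of "probability measures". -/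
def probSet (X : Type*) [TopologicalSpace X] : Set (Meas X) :=
  {μ | μ ∈ PosMeas X ∧ μ (1 : C(X, ℝ)) = 1}

theorem isClosed_probSet : IsClosed (probSet X) := by
  have h1 : probSet X =
      (⋂ (f : C(X, ℝ)) (_ : ∀ x, 0 ≤ f x), (fun μ : Meas X => μ f) ⁻¹' Ici 0) ∩
        ((fun μ : Meas X => μ (1 : C(X, ℝ))) ⁻¹' {1}) := by
    ext μ
    simp only [probSet, mem_setOf_eq, PosMeas, mem_inter_iff, mem_iInter, mem_preimage,
      mem_Ici, mem_singleton_iff]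
  rw [h1]
  refine IsClosed.inter ?_ ?_
  · exact isClosed_iInter fun f => isClosed_iInter fun _ =>
      isClosed_Ici.preimage (WeakDual.eval_continuous f)
  · exact isClosed_singleton.preimage (WeakDual.eval_continuous _)

theorem convex_probSet : Convex ℝ (probSet X) := by
  intro μ hμ ν hν a b ha hb hab
  constructor
  · intro f hf
    have : (a • μ + b • ν) f = a * μ f + b * ν f := rfl
    rw [this]
    exact add_nonneg (mul_nonneg ha (hμ.1 f hf)) (mul_nonneg hb (hν.1 f hf))
  · have : (a • μ + b • ν) (1 : C(X,ℝ)) = a * μ 1 + b * ν 1 := rfl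
    rw [this, hμ.2, hν.2, mul_one, mul_one, hab]

theorem isCompact_probSet [CompactSpace X] : IsCompact (probSet X) := by
  apply WeakDual.isCompact_of_bounded_of_closed _ isClosed_probSet
  apply Bornology.IsBounded.subset (Metric.isBounded_closedBall (x := (0 : StrongDual ℝ C(X,ℝ))) (r := 1))
  intro μ hμ
  rw [Metric.mem_closedBall]; refine (dist_zero_right μ).le.trans ?_
  refine ContinuousLinearMap.opNorm_le_bound _ zero_le_one fun g => ?_
  rw [one_mul]
  have hpos := (hμ : StrongDual.toWeakDual μ ∈ probSet X).1
  have hone := (hμ : StrongDual.toWeakDual μ ∈ probSet X).2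
  have h1 : μ g ≤ ‖g‖ := by
    have hf : ∀ x, 0 ≤ ((‖g‖ : ℝ) • (1 : C(X,ℝ)) - g) x := by
      intro x
      have := g.norm_coe_le_norm x
      simp only [ContinuousMap.sub_apply, ContinuousMap.smul_apply, ContinuousMap.one_apply,
        smul_eq_mul, mul_one]
      have : g x ≤ ‖g x‖ := le_abs_self _
      linarith [g.norm_coe_le_norm x]
    have h2 := hpos _ hf
    have h3 : (StrongDual.toWeakDual μ) ((‖g‖ : ℝ) • (1 : C(X,ℝ)) - g)
        = ‖g‖ * (StrongDual.toWeakDual μ) (1 : C(X,ℝ)) - (StrongDual.toWeakDual μ) g := by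
      rw [map_sub, map_smul]; rfl
    have h3' : 0 ≤ ‖g‖ * μ 1 - μ g := le_of_le_of_eq h2 h3
    have hone' : μ 1 = 1 := hone
    rw [hone', mul_one] at h3'
    have h4 : μ g = (StrongDual.toWeakDual μ) g := rfl
    linarith
  have h2 : -(μ g) ≤ ‖g‖ := by
    have hf : ∀ x, 0 ≤ ((‖g‖ : ℝ) • (1 : C(X,ℝ)) + g) x := by
      intro x
      simp only [ContinuousMap.add_apply, ContinuousMap.smul_apply, ContinuousMap.one_apply,
        smul_eq_mul, mul_one]
      have : -(g x) ≤ ‖g x‖ := neg_le_abs _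
      linarith [g.norm_coe_le_norm x]
    have h2 := hpos _ hf
    have h3 : (StrongDual.toWeakDual μ) ((‖g‖ : ℝ) • (1 : C(X,ℝ)) + g)
        = ‖g‖ * (StrongDual.toWeakDual μ) (1 : C(X,ℝ)) + (StrongDual.toWeakDual μ) g := by
      rw [map_add, map_smul]; rfl
    have h3' : 0 ≤ ‖g‖ * μ 1 + μ g := le_of_le_of_eq h2 h3
    have hone' : μ 1 = 1 := hone
    rw [hone', mul_one] at h3'
    have h4 : μ g = (StrongDual.toWeakDual μ) g := rfl
    linarith
  rw [Real.norm_eq_abs, abs_le]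
  constructor <;> linarith

theorem dirac_mem_probSet (x : X) : dirac x ∈ probSet X := by
  constructor
  · intro f hf; exact hf x
  · show (1 : C(X,ℝ)) x = 1
    simp

/-- Existence of a Clausius–Duhem functional for a Kelvin–Planck theory. -/
theorem exists_cd [CompactSpace X] {P : Set (VSp X)} (hP : IsKelvinPlanck P) :
    ∃ η β : C(X, ℝ), (∀ x, 0 < β x) ∧ ∀ p ∈ hatP P, p.2 β ≤ p.1 η := by
  classical
  set s : Set (VSp X) := ({0} : Set (Meas X)) ×ˢ probSet X with hs
  have hscomp : IsCompact s := isCompact_singleton.prod isCompact_probSet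
  have hsconv : Convex ℝ s := (convex_singleton 0).prod convex_probSet
  have htconv : Convex ℝ (hatP P) := hP.1.2
  have htclosed : IsClosed (hatP P) := isClosed_closure
  have hdisj : Disjoint s (hatP P) := by
    rw [Set.disjoint_left]
    rintro ⟨z1, z2⟩ ⟨hz1, hz2⟩ hmem
    have h1 : ((z1, z2) : VSp X) ∈ hatP P ∩ (({0} : Set (Meas X)) ×ˢ PosMeas X) :=
      ⟨hmem, hz1, hz2.1⟩
    rw [hP.2] at h1
    have h2 : z2 = 0 := congrArg Prod.snd h1
    have h3 := hz2.2
    rw [h2] at h3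
    have h4 : ((0 : Meas X)) (1 : C(X,ℝ)) = (0:ℝ) := rfl
    rw [h4] at h3
    norm_num at h3
  obtain ⟨f, u, w, hfu, huw, hfw⟩ :=
    geometric_hahn_banach_compact_closed hsconv hscomp htconv htclosed hdisj
  obtain ⟨hw0, hnonneg⟩ := nonneg_of_sep hP f w hfw
  obtain ⟨η, γ, hdec⟩ := decompose_functional f
  have hγ : ∀ x : X, γ x < 0 := by
    intro x
    have hmem : (((0 : Meas X), dirac x) : VSp X) ∈ s := ⟨rfl, dirac_mem_probSet x⟩
    have := hfu _ hmem
    rw [hdec] at this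
    have h2 : ((0 : Meas X)) η + (dirac x) γ = γ x := by
      show (0:ℝ) + γ x = γ x
      ring
    rw [h2] at this
    linarith
  refine ⟨η, -γ, fun x => by simpa using hγ x, fun p hp => ?_⟩
  have h1 := hnonneg p hp
  rw [hdec] at h1
  have h2 : p.2 (-γ) = -(p.2 γ) := map_neg p.2 γ
  linarith [h1, h2.le, h2.ge]

/-- The key dichotomy: a point outside `hatP P` either can be moved into it by
adding a positive heat absorption, or is strictly separated by a CD functional. -/
theorem key_dichotomy [CompactSpace X] [Nonempty X] {P : Set (VSp X)}
    (hP : IsKelvinPlanck P) (v : VSp X) (hv : v ∉ hatP P) :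
    (∃ s : ℝ, ∃ π : Meas X, 0 < s ∧ π ∈ probSet X ∧ v + s • (((0 : Meas X), π) : VSp X) ∈ hatP P)
      ∨ (∃ η β : C(X, ℝ), (∀ x, 0 < β x) ∧ (∀ p ∈ hatP P, p.2 β ≤ p.1 η) ∧ v.1 η < v.2 β) := by
  classical
  set Δ : Set (VSp X) := ({0} : Set (Meas X)) ×ˢ probSet X with hΔ
  have hΔcomp : IsCompact Δ := isCompact_singleton.prod isCompact_probSet
  have hΔconv : Convex ℝ Δ := (convex_singleton 0).prod convex_probSet
  have hΔne : Δ.Nonempty :=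
    ⟨((0 : Meas X), dirac (Classical.arbitrary X)), rfl, dirac_mem_probSet _⟩
  set S : Set (VSp X) := convexJoin ℝ {v} Δ with hS
  have hSconv : Convex ℝ S := (convex_singleton v).convexJoin hΔconv
  have hSeq : S = (fun q : ℝ × VSp X => (1 - q.1) • v + q.1 • q.2) '' (Icc (0:ℝ) 1 ×ˢ Δ) := by
    ext z
    constructor
    · intro hz
      rw [hS, mem_convexJoin] at hz
      obtain ⟨x, hx, y, hy, hseg⟩ := hz
      rw [mem_singleton_iff] at hx
      rw [hx] at hseg
      rw [segment_eq_image] at hseg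
      obtain ⟨θ, hθ, heq⟩ := hseg
      exact ⟨(θ, y), ⟨hθ, hy⟩, heq⟩
    · rintro ⟨⟨θ, y⟩, ⟨hθ, hy⟩, heq⟩
      rw [hS, mem_convexJoin]
      refine ⟨v, rfl, y, hy, ?_⟩
      rw [segment_eq_image]
      exact ⟨θ, hθ, heq⟩
  have hScomp : IsCompact S := by
    rw [hSeq]
    apply (isCompact_Icc.prod hΔcomp).image
    exact ((continuous_const.sub continuous_fst).smul continuous_const).add
      (continuous_fst.smul continuous_snd)
  by_cases hdisj : Disjoint S (hatP P)
  · right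
    obtain ⟨f, u, w, hfu, huw, hfw⟩ := geometric_hahn_banach_compact_closed hSconv hScomp
      hP.1.2 isClosed_closure hdisj
    obtain ⟨hw0, hnonneg⟩ := nonneg_of_sep hP f w hfw
    obtain ⟨η, γ, hdec⟩ := decompose_functional f
    have hγ : ∀ x : X, γ x < 0 := by
      intro x
      have hmem : (((0 : Meas X), dirac x) : VSp X) ∈ S :=
        subset_convexJoin_right (singleton_nonempty v) ⟨rfl, dirac_mem_probSet x⟩
      have := hfu _ hmem
      rw [hdec] at this
      have h2 : ((0 : Meas X)) η + (dirac x) γ = γ x := by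
        show (0:ℝ) + γ x = γ x
        ring
      rw [h2] at this
      linarith
    refine ⟨η, -γ, fun x => by simpa using hγ x, ?_, ?_⟩
    · intro p hp
      have h1 := hnonneg p hp
      rw [hdec] at h1
      have h2 : p.2 (-γ) = -(p.2 γ) := map_neg p.2 γ
      linarith [h2.le, h2.ge]
    · have hvS : v ∈ S := subset_convexJoin_left hΔne rfl
      have := hfu _ hvS
      rw [hdec] at this
      have h2 : v.2 (-γ) = -(v.2 γ) := map_neg v.2 γ
      linarith [h2.le, h2.ge]
  · left
    rw [Set.not_disjoint_iff] at hdisj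
    obtain ⟨z, hzS, hzP⟩ := hdisj
    rw [hS, mem_convexJoin] at hzS
    obtain ⟨x, hx, y, hy, hseg⟩ := hzS
    rw [mem_singleton_iff] at hx
    rw [hx] at hseg
    obtain ⟨a, b, ha, hb, hab, heq⟩ := hseg
    obtain ⟨hy1, hy2⟩ := hy
    rw [mem_singleton_iff] at hy1
    obtain ⟨y1, y2⟩ := y
    have hy1' : y1 = 0 := hy1
    subst hy1'
    rcases eq_or_lt_of_le ha with ha0 | hapos
    · -- a = 0 : z = (0, y2) ∈ hatP, contradicting Kelvin–Planck
      exfalso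
      have hb1 : b = 1 := by linarith
      have hzeq : z = ((0 : Meas X), y2) := by
        rw [← heq, ← ha0, hb1]
        simp
      have h1 : z ∈ hatP P ∩ (({0} : Set (Meas X)) ×ˢ PosMeas X) := by
        refine ⟨hzP, ?_⟩
        rw [hzeq]
        exact ⟨rfl, hy2.1⟩
      rw [hP.2] at h1
      have h2 : y2 = 0 := by
        have := congrArg Prod.snd h1
        rw [hzeq] at this
        exact this
      have h5 := hy2.2
      rw [h2] at h5
      have h6 : ((0 : Meas X)) (1 : C(X,ℝ)) = (0:ℝ) := rfl
      rw [h6] at h5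
      norm_num at h5
    · rcases eq_or_lt_of_le hb with hb0 | hbpos
      · -- b = 0 : z = v ∈ hatP, contradiction
        exfalso
        have ha1 : a = 1 := by linarith
        have : z = v := by
          rw [← heq, ← hb0, ha1]
          simp
        rw [this] at hzP
        exact hv hzP
      · refine ⟨a⁻¹ * b, y2, mul_pos (inv_pos.2 hapos) hbpos, hy2, ?_⟩
        have h1 : a⁻¹ • z ∈ hatP P := smul_mem_hatP (inv_nonneg.2 ha) hzP
        have h2 : a⁻¹ • z = v + (a⁻¹ * b) • (((0 : Meas X), y2) : VSp X) := by
          rw [← heq, smul_add, smul_smul, smul_smul, inv_mul_cancel₀ (ne_of_gt hapos), one_smul]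
        rw [h2] at h1
        exact h1

/-- A cyclic heat element annihilated by every CD functional lies in `hatP P`. -/
theorem mem_hatP_of_cd_zero [CompactSpace X] [Nonempty X] {P : Set (VSp X)}
    (hP : IsKelvinPlanck P) (q : Meas X)
    (hq : ∀ η β : C(X, ℝ), (∀ x, 0 < β x) → (∀ p ∈ hatP P, p.2 β ≤ p.1 η) → q β = 0) :
    (((0 : Meas X), q) : VSp X) ∈ hatP P := by
  by_contra hv
  rcases key_dichotomy hP ((0 : Meas X), q) hv with
    ⟨s, π, hs, hπ, hmem⟩ | ⟨η, β, hβ, hval, hlt⟩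
  · obtain ⟨η₀, β₀, hβ₀, hval₀⟩ := exists_cd hP
    have h1 := hval₀ _ hmem
    have h2 : ((((0 : Meas X), q) : VSp X) + s • (((0 : Meas X), π) : VSp X)).2 β₀
        = q β₀ + s * π β₀ := rfl
    have h3 : ((((0 : Meas X), q) : VSp X) + s • (((0 : Meas X), π) : VSp X)).1 η₀
        = 0 := by
      show ((0 : Meas X) + s • (0 : Meas X)) η₀ = 0
      rw [smul_zero, add_zero]
      rfl
    rw [h2, h3, hq η₀ β₀ hβ₀ hval₀, zero_add] at h1
    -- but π β₀ > 0
    obtain ⟨x₀, -, hx₀⟩ := IsCompact.exists_isMinOn isCompact_univ univ_nonempty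
      (map_continuous β₀).continuousOn
    have hfpos : ∀ x, 0 ≤ (β₀ - β₀ x₀ • (1 : C(X,ℝ))) x := by
      intro x
      have : β₀ x₀ ≤ β₀ x := hx₀ (mem_univ x)
      simp only [ContinuousMap.sub_apply, ContinuousMap.smul_apply, ContinuousMap.one_apply,
        smul_eq_mul, mul_one]
      linarith
    have h4 := hπ.1 _ hfpos
    have h5 : π (β₀ - β₀ x₀ • (1 : C(X,ℝ))) = π β₀ - β₀ x₀ * π 1 := by
      rw [map_sub, map_smul]; rfl
    rw [h5, hπ.2, mul_one] at h4
    nlinarith [hβ₀ x₀]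
  · have h0 := hq η β hβ hval
    have h1 : ((((0 : Meas X), q) : VSp X)).1 η = 0 := rfl
    have h2 : ((((0 : Meas X), q) : VSp X)).2 β = q β := rfl
    rw [h1, h2, h0] at hlt
    exact lt_irrefl 0 hlt

/-- From a CD temperature scale, extract the reciprocal function and the extended
inequality on `hatP P`. -/
theorem cdtemp_beta {P : Set (VSp X)} {T : C(X, ℝ)} (h : IsCDTemp P T) :
    ∃ η βT : C(X, ℝ), (∀ x, βT x = (T x)⁻¹) ∧ (∀ x, 0 < βT x) ∧
      ∀ p ∈ hatP P, p.2 βT ≤ p.1 η := by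
  obtain ⟨η, hpos, hineq⟩ := h
  set βT : C(X, ℝ) := ⟨fun x => (T x)⁻¹,
    (map_continuous T).inv₀ fun x => (hpos x).ne'⟩ with hβT
  have h0 : ∀ p ∈ P, p.2 βT ≤ p.1 η := hineq βT fun x => rfl
  have h1 : ∀ p ∈ P, 0 ≤ funcOf η βT p := by
    intro p hp
    rw [funcOf_apply]
    linarith [h0 p hp]
  have h2 := nonneg_on_hatP (funcOf η βT) h1
  refine ⟨η, βT, fun x => rfl, fun x => inv_pos.2 (hpos x), fun p hp => ?_⟩
  have := h2 p hp
  rw [funcOf_apply] at this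
  linarith

/-- A strictly positive function satisfying the CD inequality on `hatP P` gives a
CD temperature scale, namely its reciprocal. -/
theorem isCDTemp_of_valid {P : Set (VSp X)} (η β : C(X, ℝ)) (hβ : ∀ x, 0 < β x)
    (hval : ∀ p ∈ hatP P, p.2 β ≤ p.1 η) :
    ∃ T : C(X, ℝ), IsCDTemp P T ∧ ∀ x, T x = (β x)⁻¹ := by
  set T : C(X, ℝ) := ⟨fun x => (β x)⁻¹,
    (map_continuous β).inv₀ fun x => (hβ x).ne'⟩ with hT
  refine ⟨T, ⟨η, fun x => inv_pos.2 (hβ x), fun β' hβ' p hp => ?_⟩, fun x => rfl⟩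
  have hββ' : β' = β := by
    ext x
    rw [hβ' x]
    show ((β x)⁻¹)⁻¹ = β x
    exact inv_inv _
  rw [hββ']
  exact hval p (subset_hatP P hp)

end ThermoAux

/-- **Proposition.** Let `(X, P)` be a Kelvin–Planck theory and `X₀ ⊆ X`.  The
following are equivalent: (i) all restrictions to `X₀` of Clausius–Duhem temperature
scales are positive multiples of some fixed one; (ii) between each pair of distinct
states of `X₀` there is a Carnot element `(0, c'·δ_{σ'} − c·δ_σ)`. -/
theorem subdomain_temperature_uniqueness_iff_carnot
    {X : Type*} [TopologicalSpace X] [CompactSpace X] [T2Space X]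
    (P : Set (VSp X)) (hP : IsKelvinPlanck P) (X₀ : Set X) :
    (∃ T₀ : C(X, ℝ), IsCDTemp P T₀ ∧ ∀ T : C(X, ℝ), IsCDTemp P T →
        ∃ α : ℝ, 0 < α ∧ ∀ x ∈ X₀, T x = α * T₀ x) ↔
      (∀ a ∈ X₀, ∀ b ∈ X₀, a ≠ b → ∃ c' c : ℝ, 0 < c' ∧ 0 < c ∧
        ((0 : Meas X), c' • dirac a - c • dirac b) ∈ hatP P ∧
        -(((0 : Meas X), c' • dirac a - c • dirac b) : VSp X) ∈ hatP P) := by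
  constructor
  · rintro ⟨T₀, hT₀, huniq⟩ a ha b hb hab
    haveI : Nonempty X := ⟨a⟩
    obtain ⟨η₀, β₀, hβ₀eq, hβ₀pos, hval₀⟩ := cdtemp_beta hT₀
    set r : ℝ := β₀ a / β₀ b with hr
    have hrpos : 0 < r := div_pos (hβ₀pos a) (hβ₀pos b)
    have hT₀pos : ∀ x, 0 < T₀ x := by
      intro x
      have := hβ₀pos x
      rw [hβ₀eq x] at this
      exact inv_pos.mp this
    have hkey : ∀ η β : C(X, ℝ), (∀ x, 0 < β x) → (∀ p ∈ hatP P, p.2 β ≤ p.1 η) →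
        β a - r * β b = 0 := by
      intro η β hβ hval
      obtain ⟨T, hT, hTx⟩ := isCDTemp_of_valid η β hβ hval
      obtain ⟨α, hα, hres⟩ := huniq T hT
      have e : ∀ y ∈ X₀, β y = α⁻¹ * β₀ y := by
        intro y hy
        have h1 : T y = α * T₀ y := hres y hy
        have h2 : T y = (β y)⁻¹ := hTx y
        have h3 : β y = (α * T₀ y)⁻¹ := by rw [← h1, h2, inv_inv]
        rw [h3, mul_inv, ← hβ₀eq y]
      rw [e a ha, e b hb, hr]
      have hne : β₀ b ≠ 0 := (hβ₀pos b).ne'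
      field_simp
      ring
    have h1 : (((0 : Meas X), dirac a - r • dirac b) : VSp X) ∈ hatP P := by
      apply mem_hatP_of_cd_zero hP
      intro η β hβ hval
      have hk := hkey η β hβ hval
      have h2 : (dirac a - r • dirac b) β = β a - r * β b := rfl
      rw [h2]
      linarith
    have h2 : (((0 : Meas X), r • dirac b - dirac a) : VSp X) ∈ hatP P := by
      apply mem_hatP_of_cd_zero hP
      intro η β hβ hval
      have hk := hkey η β hβ hval
      have h3 : (r • dirac b - dirac a) β = r * β b - β a := rfl
      rw [h3]
      linarith
    refine ⟨1, r, one_pos, hrpos, ?_, ?_⟩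
    · rw [one_smul]; exact h1
    · have heq : -((((0 : Meas X), (1:ℝ) • dirac a - r • dirac b)) : VSp X)
          = (((0 : Meas X), r • dirac b - dirac a) : VSp X) := by
        rw [one_smul, Prod.neg_mk, neg_zero, neg_sub]
      rw [heq]
      exact h2
  · intro hcar
    obtain ⟨η₀, β₀, hβ₀pos, hval₀⟩ := exists_cd hP
    obtain ⟨T₀, hT₀, hT₀x⟩ := isCDTemp_of_valid η₀ β₀ hβ₀pos hval₀
    refine ⟨T₀, hT₀, ?_⟩
    intro T hT
    obtain ⟨η, βT, hβTeq, hβTpos, hval⟩ := cdtemp_beta hT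
    have hratio : ∀ x ∈ X₀, ∀ y ∈ X₀, x ≠ y → βT x * β₀ y = βT y * β₀ x := by
      intro x hx y hy hxy
      obtain ⟨c', c, hc', hc, hmem, hmemneg⟩ := hcar x hx y hy hxy
      set w : VSp X := ((0 : Meas X), c' • dirac x - c • dirac y) with hw
      have hj1 := hval w hmem
      have hj2 := hval (-w) hmemneg
      have ha1 : w.2 βT = c' * βT x - c * βT y := rfl
      have ha2 : w.1 η = 0 := rfl
      have ha3 : (-w).2 βT = -(c' * βT x - c * βT y) := rfl
      have ha4 : (-w).1 η = 0 := by
        show (-(0 : Meas X)) η = 0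
        rw [neg_zero]
        rfl
      rw [ha1, ha2] at hj1
      rw [ha3, ha4] at hj2
      have hTeq : c' * βT x = c * βT y := by linarith
      have hk1 := hval₀ w hmem
      have hk2 := hval₀ (-w) hmemneg
      have hb1 : w.2 β₀ = c' * β₀ x - c * β₀ y := rfl
      have hb2 : w.1 η₀ = 0 := rfl
      have hb3 : (-w).2 β₀ = -(c' * β₀ x - c * β₀ y) := rfl
      have hb4 : (-w).1 η₀ = 0 := by
        show (-(0 : Meas X)) η₀ = 0
        rw [neg_zero]
        rfl
      rw [hb1, hb2] at hk1
      rw [hb3, hb4] at hk2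
      have h₀eq : c' * β₀ x = c * β₀ y := by linarith
      have hgoal : c' * (βT x * β₀ y) = c' * (βT y * β₀ x) := by
        linear_combination β₀ y * hTeq - βT y * h₀eq
      exact mul_left_cancel₀ (ne_of_gt hc') hgoal
    rcases X₀.eq_empty_or_nonempty with hX | ⟨x₀, hx₀⟩
    · exact ⟨1, one_pos, fun x hx => by rw [hX] at hx; exact absurd hx (notMem_empty x)⟩
    · have hT₀pos : ∀ x, 0 < T₀ x := by
        intro x
        rw [hT₀x x]
        exact inv_pos.2 (hβ₀pos x)
      have hTpos : ∀ x, 0 < T x := by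
        intro x
        have := hβTpos x
        rw [hβTeq x] at this
        exact inv_pos.mp this
      refine ⟨T x₀ / T₀ x₀, div_pos (hTpos x₀) (hT₀pos x₀), ?_⟩
      intro x hx
      by_cases hxx : x = x₀
      · subst hxx
        exact (div_mul_cancel₀ (T x) (hT₀pos x).ne').symm
      · have h1 := hratio x hx x₀ hx₀ hxx
        have hβ₀T₀ : ∀ y, β₀ y = (T₀ y)⁻¹ := by
          intro y
          rw [hT₀x y, inv_inv]
        rw [hβTeq, hβTeq, hβ₀T₀, hβ₀T₀] at h1
        have hne1 : T x ≠ 0 := (hTpos x).ne'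
        have hne2 : T x₀ ≠ 0 := (hTpos x₀).ne'
        have hne3 : T₀ x ≠ 0 := (hT₀pos x).ne'
        have hne4 : T₀ x₀ ≠ 0 := (hT₀pos x₀).ne'
        field_simp at h1 ⊢
        linarith
end

section
/- Let (Σ,P) be a Kelvin–Planck theory having an essentially unique Clausius–Duhem pair (η⁰,T⁰) (i.e., every Clausius–Duhem pair (η,T) satisfies T = αT⁰ and η = (1/α)η⁰ + β for some α > 0, β ∈ ℝ). Then: (1) the set of reversible elements of \hat{P} coincides with the set of all (Δm,q) ∈ V(Σ) satisfying ∫_Σ η⁰ d(Δm) = ∫_Σ (1/T⁰) dq; (2) if even one member of {(Δm,q) ∈ V(Σ) : ∫_Σ η⁰ d(Δm) > ∫_Σ (1/T⁰) dq} belongs to \hat{P}, then all do; (3) if P contains at least one irreversible process, then \hat{P} contains every member of V(Σ) satisfying ∫_Σ η⁰ d(Δm) ≥ ∫_Σ (1/T⁰) dq. -/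
open Set

section AuxRepr

/-- Every continuous linear functional on the weak-star dual is evaluation at a
point of the predual (more precisely, at a finite linear combination). -/
lemma weakDual_repr {E : Type*} [AddCommGroup E] [Module ℝ E] [TopologicalSpace E]
    (f : WeakDual ℝ E →L[ℝ] ℝ) : ∃ g : E, ∀ μ : WeakDual ℝ E, f μ = μ g := by
  classical
  have hb := (topDualPairing ℝ E).hasBasis_weakBilin
  have h1 : f ⁻¹' Metric.ball 0 1 ∈ nhds (0 : WeakDual ℝ E) := by
    have h0 : Metric.ball (0 : ℝ) 1 ∈ nhds (f 0) := by
      rw [map_zero]; exact Metric.ball_mem_nhds 0 one_pos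
    exact f.continuous.continuousAt.preimage_mem_nhds h0
  obtain ⟨U, hU, hUf⟩ := hb.mem_iff.mp h1
  obtain ⟨t, r, hr, rfl⟩ := (SeminormFamily.basisSets_iff _).mp hU
  let L : t → (WeakDual ℝ E →ₗ[ℝ] ℝ) := fun y =>
    { toFun := fun μ => μ (y : E)
      map_add' := fun _ _ => rfl
      map_smul' := fun _ _ => rfl }
  have hker : (⨅ i, LinearMap.ker (L i)) ≤
      LinearMap.ker (f : WeakDual ℝ E →ₗ[ℝ] ℝ) := by
    intro μ hμ
    simp only [Submodule.mem_iInf, LinearMap.mem_ker, ContinuousLinearMap.coe_coe] at hμ ⊢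
    by_contra hfμ
    have hball : ∀ c : ℝ,
        c • μ ∈ Seminorm.ball (t.sup ((topDualPairing ℝ E).toSeminormFamily)) 0 r := by
      intro c
      refine (Seminorm.mem_ball_zero _).mpr ?_
      apply Seminorm.finset_sup_apply_lt hr
      intro i hi
      have h0 : μ i = 0 := hμ ⟨i, hi⟩
      show ‖c * μ i‖ < r
      rw [h0, mul_zero, norm_zero]
      exact hr
    have h2 : f ((2 * (f μ)⁻¹) • μ) ∈ Metric.ball (0 : ℝ) 1 := hUf (hball (2 * (f μ)⁻¹))
    simp only [Set.mem_preimage, Metric.mem_ball, map_smul, smul_eq_mul] at h2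
    have he2 : 2 * (f μ)⁻¹ * f μ = 2 := by field_simp
    rw [he2, dist_zero_right] at h2
    norm_num at h2
  have hspan := mem_span_of_iInf_ker_le_ker (𝕜 := ℝ) hker
  obtain ⟨c, hc⟩ := (Submodule.mem_span_range_iff_exists_fun ℝ).mp hspan
  refine ⟨∑ i, c i • (i : E), fun μ => ?_⟩
  have h3 := congrArg (fun K : WeakDual ℝ E →ₗ[ℝ] ℝ => K μ) hc
  simp only [LinearMap.coe_sum, Finset.sum_apply, LinearMap.smul_apply,
    ContinuousLinearMap.coe_coe, smul_eq_mul] at h3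
  rw [← h3, map_sum]
  refine Finset.sum_congr rfl fun i _ => ?_
  rw [map_smul, smul_eq_mul]
  rfl

/-- The weak-star dual is locally convex. -/
instance weakDual_locallyConvexSpace {E : Type*} [AddCommGroup E] [Module ℝ E]
    [TopologicalSpace E] : LocallyConvexSpace ℝ (WeakDual ℝ E) :=
  WeakBilin.locallyConvexSpace

end AuxRepr

/-- **Corollary.** Let `(X, P)` be a Kelvin–Planck theory with an essentially unique
Clausius–Duhem pair `(η⁰, T⁰)` (with `β⁰ = 1/T⁰`).  Then: (1) the reversible
elements of `\hat P` are exactly the `(Δm, q) ∈ V(X)` with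
`∫ η⁰ dΔm = ∫ (1/T⁰) dq`; (2) if one member of
`{(Δm, q) ∈ V(X) : ∫ η⁰ dΔm > ∫ (1/T⁰) dq}` lies in `\hat P` then all do;
(3) if `P` contains an irreversible process, then `\hat P` contains every member of
`V(X)` with `∫ η⁰ dΔm ≥ ∫ (1/T⁰) dq`. -/
theorem cd_uniqueness_and_irreversibility
    {X : Type*} [TopologicalSpace X] [CompactSpace X] [T2Space X]
    (P : Set (VSp X)) (hP : IsKelvinPlanck P)
    (η₀ T₀ β₀ : C(X, ℝ)) (hpair : IsCDPair P η₀ T₀) (hβ₀ : ∀ x, β₀ x = (T₀ x)⁻¹)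
    (huniq : ∀ η T : C(X, ℝ), IsCDPair P η T → ∃ α b : ℝ, 0 < α ∧ T = α • T₀ ∧
      η = α⁻¹ • η₀ + ContinuousMap.const X b) :
    ({p : VSp X | p ∈ hatP P ∧ -p ∈ hatP P} =
      {p : VSp X | p.1 (1 : C(X, ℝ)) = 0 ∧ p.1 η₀ = p.2 β₀}) ∧
    ((∃ p : VSp X, p.1 (1 : C(X, ℝ)) = 0 ∧ p.2 β₀ < p.1 η₀ ∧ p ∈ hatP P) →
      ∀ p : VSp X, p.1 (1 : C(X, ℝ)) = 0 → p.2 β₀ < p.1 η₀ → p ∈ hatP P) ∧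
    ((∃ p ∈ P, ¬ (p ∈ hatP P ∧ -p ∈ hatP P)) →
      ∀ p : VSp X, p.1 (1 : C(X, ℝ)) = 0 → p.2 β₀ ≤ p.1 η₀ → p ∈ hatP P) := by
  classical
  obtain ⟨⟨hmass, hconv⟩, hKP⟩ := hP
  -- pointwise computation rules for the weak-star dual
  have sapp : ∀ (c : ℝ) (μ : Meas X) (g : C(X, ℝ)), (c • μ) g = c * μ g :=
    fun _ _ _ => rfl
  have napp : ∀ (μ : Meas X) (g : C(X, ℝ)), (-μ) g = -(μ g) := fun _ _ => rfl
  -- basic facts about K = hatP P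
  have h0K : ((0, 0) : VSp X) ∈ hatP P := by
    have h : ((0, 0) : VSp X) ∈ ({((0 : Meas X), (0 : Meas X))} : Set (VSp X)) := rfl
    rw [← hKP] at h
    exact h.1
  have hclosed : IsClosed (hatP P) := isClosed_closure
  have hsmul : ∀ {c : ℝ}, 0 ≤ c → ∀ {p : VSp X}, p ∈ hatP P → c • p ∈ hatP P := by
    intro c hc p hp
    have hmaps : Set.MapsTo (fun q : VSp X => c • q) (coneOf P) (coneOf P) := by
      rintro q ⟨d, hd, p', hp', rfl⟩
      exact ⟨c * d, mul_nonneg hc hd, p', hp', smul_smul c d p'⟩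
    exact hmaps.closure (continuous_const_smul c) hp
  have hPK : ∀ p ∈ P, p ∈ hatP P := fun p hp =>
    subset_closure ⟨1, zero_le_one, p, hp, (one_smul ℝ p).symm⟩
  have hevalc : ∀ g : C(X, ℝ), Continuous fun μ : Meas X => μ g :=
    fun g => WeakDual.eval_continuous g
  -- mass conservation on hatP P
  have hM : ∀ p ∈ hatP P, p.1 (1 : C(X, ℝ)) = 0 := by
    intro p hp
    have hsub : coneOf P ⊆ {q : VSp X | q.1 (1 : C(X, ℝ)) = 0} := by
      rintro q ⟨c, hc, p', hp', rfl⟩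
      show (c • p'.1) (1 : C(X, ℝ)) = 0
      rw [sapp, hmass p' hp', mul_zero]
    exact closure_minimal hsub
      (isClosed_eq ((hevalc 1).comp continuous_fst) continuous_const) hp
  -- the Clausius–Duhem inequality for arbitrary (g, h) extends from P to hatP P
  have hineq : ∀ g h : C(X, ℝ), (∀ p ∈ P, p.2 h ≤ p.1 g) →
      ∀ p ∈ hatP P, p.2 h ≤ p.1 g := by
    intro g h hP' p hp
    have hsub : coneOf P ⊆ {q : VSp X | q.2 h ≤ q.1 g} := by
      rintro q ⟨c, hc, p', hp', rfl⟩
      show (c • p'.2) h ≤ (c • p'.1) g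
      rw [sapp, sapp]
      exact mul_le_mul_of_nonneg_left (hP' p' hp') hc
    exact closure_minimal hsub
      (isClosed_le ((hevalc h).comp continuous_snd) ((hevalc g).comp continuous_fst)) hp
  have hCD : ∀ p ∈ hatP P, p.2 β₀ ≤ p.1 η₀ := hineq η₀ β₀ (hpair.2 β₀ hβ₀)
  have hβ₀pos : ∀ x, 0 < β₀ x := fun x => by
    rw [hβ₀ x]; exact inv_pos.mpr (hpair.1 x)
  -- the key separation lemma
  have hkey : ∀ p₀ : VSp X, p₀ ∉ hatP P →
      ∃ c b' : ℝ, (∀ k ∈ hatP P, 0 ≤ c * (k.1 η₀ - k.2 β₀) + b' * k.1 (1 : C(X, ℝ))) ∧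
        c * (p₀.1 η₀ - p₀.2 β₀) + b' * p₀.1 (1 : C(X, ℝ)) < 0 := by
    intro p₀ hp₀
    obtain ⟨f, u, hfp₀, hfK⟩ := geometric_hahn_banach_point_closed hconv hclosed hp₀
    have hu0 : u < 0 := by simpa [Prod.mk_zero_zero] using hfK _ h0K
    have hfnn : ∀ k ∈ hatP P, 0 ≤ f k := by
      intro k hk
      by_contra hneg
      push_neg at hneg
      have hc : 0 ≤ u / f k := by
        rw [div_nonneg_iff]
        exact Or.inr ⟨hu0.le, hneg.le⟩
      have h1 := hfK _ (hsmul hc hk)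
      rw [map_smul, smul_eq_mul, div_mul_cancel₀ _ (ne_of_lt hneg)] at h1
      exact lt_irrefl u h1
    -- represent f by a pair of continuous functions
    obtain ⟨g, hg⟩ := weakDual_repr (f.comp (ContinuousLinearMap.inl ℝ (Meas X) (Meas X)))
    obtain ⟨h1, hh1⟩ := weakDual_repr (f.comp (ContinuousLinearMap.inr ℝ (Meas X) (Meas X)))
    set h : C(X, ℝ) := -h1 with hhdef
    have hfrepr : ∀ p : VSp X, f p = p.1 g - p.2 h := by
      intro p
      have hpe : p = ((p.1, 0) : VSp X) + (0, p.2) := by simp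
      have e1 : f ((p.1, (0 : Meas X)) : VSp X) = p.1 g := by
        have := hg p.1
        simpa using this
      have e2 : f (((0 : Meas X), p.2) : VSp X) = p.2 h1 := by
        have := hh1 p.2
        simpa using this
      have e3 : p.2 h = -(p.2 h1) := by
        rw [hhdef]
        exact map_neg p.2 h1
      rw [e3]
      calc f p = f (((p.1, 0) : VSp X) + (0, p.2)) := by rw [← hpe]
        _ = f ((p.1, 0) : VSp X) + f (((0 : Meas X), p.2) : VSp X) := map_add f _ _
        _ = p.1 g + p.2 h1 := by rw [e1, e2]
        _ = p.1 g - -(p.2 h1) := by ring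
    -- find ε with β₀ + ε h pointwise positive
    obtain ⟨ε, hε, hβε⟩ : ∃ ε : ℝ, 0 < ε ∧ ∀ x, 0 < β₀ x + ε * h x := by
      rcases isEmpty_or_nonempty X with hX | hX
      · exact ⟨1, one_pos, fun x => (IsEmpty.false x).elim⟩
      · obtain ⟨x₀, -, hx₀⟩ := (isCompact_univ (X := X)).exists_isMinOn univ_nonempty
          (map_continuous β₀).continuousOn
        have hm : 0 < β₀ x₀ := hβ₀pos x₀
        have hMh : (0 : ℝ) < ‖h‖ + 1 := by positivity
        refine ⟨β₀ x₀ / (‖h‖ + 1), by positivity, fun x => ?_⟩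
        have hb1 : β₀ x₀ ≤ β₀ x := hx₀ (Set.mem_univ x)
        have hb2 : |h x| ≤ ‖h‖ := by
          have := h.norm_coe_le_norm x
          simpa [Real.norm_eq_abs] using this
        have hb3 : -‖h‖ ≤ h x := (abs_le.mp hb2).1
        have key : β₀ x₀ / (‖h‖ + 1) * (‖h‖ + 1) = β₀ x₀ := div_mul_cancel₀ _ hMh.ne'
        have hεpos : (0 : ℝ) < β₀ x₀ / (‖h‖ + 1) := by positivity
        nlinarith [mul_le_mul_of_nonneg_left hb3 hεpos.le]
    -- the perturbed pair is Clausius–Duhem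
    set Tε : C(X, ℝ) :=
      ⟨fun x => (β₀ x + ε * h x)⁻¹,
        ((map_continuous β₀).add (continuous_const.mul (map_continuous h))).inv₀
          (fun x => (hβε x).ne')⟩ with hTεdef
    have hCDε : IsCDPair P (η₀ + ε • g) Tε := by
      refine ⟨fun x => inv_pos.mpr (hβε x), ?_⟩
      intro β hβ p hp
      have hβeq : β = β₀ + ε • h := by
        ext x
        rw [hβ x]
        show ((β₀ x + ε * h x)⁻¹)⁻¹ = (β₀ + ε • h) x
        rw [inv_inv]
        simp [smul_eq_mul]
      rw [hβeq]
      have e1 : p.2 (β₀ + ε • h) = p.2 β₀ + ε * p.2 h := by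
        rw [map_add, map_smul, smul_eq_mul]
      have e2 : p.1 (η₀ + ε • g) = p.1 η₀ + ε * p.1 g := by
        rw [map_add, map_smul, smul_eq_mul]
      rw [e1, e2]
      have h3 := hpair.2 β₀ hβ₀ p hp
      have h4 : 0 ≤ p.1 g - p.2 h := by
        have := hfnn p (hPK p hp); rwa [hfrepr] at this
      nlinarith
    obtain ⟨α, b, hα, hT, hη⟩ := huniq _ _ hCDε
    -- pointwise identities for h and g
    have hhc : ∀ x, h x = (α⁻¹ - 1) / ε * β₀ x := by
      intro x
      have h1 : Tε x = α * T₀ x := by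
        rw [hT]; simp [smul_eq_mul]
      have h2 : (β₀ x + ε * h x)⁻¹ = α * T₀ x := h1
      have h3 : β₀ x + ε * h x = (α * T₀ x)⁻¹ := by rw [← h2, inv_inv]
      have h4 : β₀ x + ε * h x = α⁻¹ * β₀ x := by
        rw [h3, mul_inv, hβ₀ x]
      have h5 : ε * h x = (α⁻¹ - 1) * β₀ x := by linear_combination h4
      have h6 : h x = (α⁻¹ - 1) * β₀ x / ε := by
        rw [← h5]
        exact (mul_div_cancel_left₀ _ hε.ne').symm
      rw [h6]
      ring
    have hgc : ∀ x, g x = (α⁻¹ - 1) / ε * η₀ x + b / ε := by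
      intro x
      have h1 : η₀ x + ε * g x = α⁻¹ * η₀ x + b := by
        have h2 := congrArg (fun φ : C(X, ℝ) => φ x) hη
        simpa [smul_eq_mul] using h2
      have h5 : ε * g x = (α⁻¹ - 1) * η₀ x + b := by linear_combination h1
      have h6 : g x = ((α⁻¹ - 1) * η₀ x + b) / ε := by
        rw [← h5]
        exact (mul_div_cancel_left₀ _ hε.ne').symm
      rw [h6]
      ring
    have hgrepr : g = ((α⁻¹ - 1) / ε) • η₀ + (b / ε) • (1 : C(X, ℝ)) := by
      ext x
      simp [hgc x, smul_eq_mul]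
    have hhrepr : h = ((α⁻¹ - 1) / ε) • β₀ := by
      ext x
      simp [hhc x, smul_eq_mul]
    have hform : ∀ q : VSp X,
        f q = (α⁻¹ - 1) / ε * (q.1 η₀ - q.2 β₀) + b / ε * q.1 (1 : C(X, ℝ)) := by
      intro q
      rw [hfrepr, hgrepr, hhrepr, map_add, map_smul, map_smul, map_smul]
      simp only [smul_eq_mul]
      ring
    refine ⟨(α⁻¹ - 1) / ε, b / ε, fun k hk => ?_, ?_⟩
    · rw [← hform]
      exact hfnn k hk
    · rw [← hform]
      exact lt_trans hfp₀ hu0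
  -- Part (1)
  have part1 : {p : VSp X | p ∈ hatP P ∧ -p ∈ hatP P} =
      {p : VSp X | p.1 (1 : C(X, ℝ)) = 0 ∧ p.1 η₀ = p.2 β₀} := by
    have mem : ∀ q : VSp X, q.1 (1 : C(X, ℝ)) = 0 → q.1 η₀ = q.2 β₀ → q ∈ hatP P := by
      intro q hq1 hq2
      by_contra hq
      obtain ⟨c, b', hpos, hneg⟩ := hkey q hq
      rw [hq1, hq2, sub_self, mul_zero, mul_zero, add_zero] at hneg
      exact lt_irrefl 0 hneg
    ext p
    simp only [Set.mem_setOf_eq]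
    constructor
    · rintro ⟨hp, hnp⟩
      refine ⟨hM p hp, ?_⟩
      have h1 := hCD p hp
      have h2 := hCD (-p) hnp
      have e1 : (-p).2 β₀ = -(p.2 β₀) := napp p.2 β₀
      have e2 : (-p).1 η₀ = -(p.1 η₀) := napp p.1 η₀
      rw [e1, e2] at h2
      linarith
    · rintro ⟨hm0, heq⟩
      refine ⟨mem p hm0 heq, mem (-p) ?_ ?_⟩
      · have e : (-p).1 (1 : C(X, ℝ)) = -(p.1 (1 : C(X, ℝ))) := napp p.1 1
        rw [e, hm0, neg_zero]
      · have e1 : (-p).1 η₀ = -(p.1 η₀) := napp p.1 η₀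
        have e2 : (-p).2 β₀ = -(p.2 β₀) := napp p.2 β₀
        rw [e1, e2, heq]
  -- Part (2)
  have part2 : (∃ p : VSp X, p.1 (1 : C(X, ℝ)) = 0 ∧ p.2 β₀ < p.1 η₀ ∧ p ∈ hatP P) →
      ∀ p : VSp X, p.1 (1 : C(X, ℝ)) = 0 → p.2 β₀ < p.1 η₀ → p ∈ hatP P := by
    rintro ⟨ps, hps1, hpslt, hpsK⟩ p hp1 hplt
    by_contra hp
    obtain ⟨c, b', hpos, hneg⟩ := hkey p hp
    have h1 := hpos ps hpsK
    rw [hps1, mul_zero, add_zero] at h1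
    rw [hp1, mul_zero, add_zero] at hneg
    have hc : 0 ≤ c := by
      by_contra hcn
      push_neg at hcn
      nlinarith
    nlinarith
  refine ⟨part1, part2, ?_⟩
  rintro ⟨p', hp'P, hirr⟩ p hp1 hple
  have hp'K := hPK p' hp'P
  have hp'M : p'.1 (1 : C(X, ℝ)) = 0 := hmass p' hp'P
  have hΔ' : p'.2 β₀ < p'.1 η₀ := by
    rcases lt_or_eq_of_le (hCD p' hp'K) with hlt | heq
    · exact hlt
    · exact absurd ((Set.ext_iff.mp part1 p').mpr ⟨hp'M, heq.symm⟩) hirr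
  rcases lt_or_eq_of_le hple with hlt | heq
  · exact part2 ⟨p', hp'M, hΔ', hp'K⟩ p hp1 hlt
  · exact ((Set.ext_iff.mp part1 p).mpr ⟨hp1, heq.symm⟩).1
end

section
/- Let (Σ,P) be a Kelvin–Planck theory and let Q := {(v,w) ∈ V(Σ) : ∫_Σ η dv ≥ ∫_Σ (1/T) dw for every Clausius–Duhem pair (η,T) of (Σ,P)}. For any member (v,w) of Q that is not a member of \hat{P}, there exists ν ∈ M₊(Σ) such that (v, w + ν) is a member of \hat{P}. -/
open Set

section AuxLemmas

instance weakDualLCS (E : Type*) [AddCommGroup E] [Module ℝ E] [TopologicalSpace E] :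
    LocallyConvexSpace ℝ (WeakDual ℝ E) := WeakBilin.locallyConvexSpace

/-- Every continuous linear functional on a weak-star dual is evaluation at a point
of the predual. -/
theorem WeakDual.exists_eval {E : Type*} [AddCommGroup E] [Module ℝ E] [TopologicalSpace E]
    [IsTopologicalAddGroup E] [ContinuousSMul ℝ E]
    (L : WeakDual ℝ E →L[ℝ] ℝ) : ∃ g : E, ∀ φ : WeakDual ℝ E, L φ = φ g := by
  classical
  set B := topDualPairing ℝ E with hB
  have hp := B.weakBilin_withSeminorms
  set q : Seminorm ℝ (WeakDual ℝ E) := (normSeminorm ℝ ℝ).comp (L : WeakDual ℝ E →ₗ[ℝ] ℝ) with hq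
  have hqc : Continuous q := by
    have : (⇑q) = fun φ : WeakDual ℝ E => ‖L φ‖ := rfl
    rw [this]; exact L.continuous.norm
  obtain ⟨s, C, hC0, hCle⟩ := Seminorm.bound_of_continuous hp q hqc
  let Lι : ↥s → (WeakDual ℝ E →ₗ[ℝ] ℝ) := fun g =>
    { toFun := fun φ => φ (g : E)
      map_add' := fun φ ψ => rfl
      map_smul' := fun c φ => rfl }
  have hker : ⨅ i : ↥s, LinearMap.ker (Lι i) ≤ LinearMap.ker (L : WeakDual ℝ E →ₗ[ℝ] ℝ) := by
    intro φ hφ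
    simp only [Submodule.mem_iInf, LinearMap.mem_ker] at hφ ⊢
    have h0 : (s.sup (LinearMap.toSeminormFamily B)) φ = 0 := by
      refine le_antisymm (Seminorm.finset_sup_apply_le le_rfl fun i hi => ?_)
        (apply_nonneg _ _)
      have hzi : φ i = 0 := hφ ⟨i, hi⟩
      show ‖φ i‖ ≤ 0
      simp [hzi]
    have hb := hCle φ
    have : q φ ≤ 0 := by
      have hb' : q φ ≤ C • ((s.sup (LinearMap.toSeminormFamily B)) φ) := hb
      rwa [h0, smul_zero] at hb'
    have h3 : ‖L φ‖ ≤ 0 := this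
    simpa using norm_le_zero_iff.mp h3
  have hspan := mem_span_of_iInf_ker_le_ker hker
  obtain ⟨c, hc⟩ := (Submodule.mem_span_range_iff_exists_fun ℝ).1 hspan
  refine ⟨∑ i : ↥s, c i • (i : E), fun φ => ?_⟩
  have h1 : (L : WeakDual ℝ E →ₗ[ℝ] ℝ) φ = ∑ i : ↥s, c i • φ (i : E) := by
    rw [← hc]; simp [Lι]; rfl
  have h2 : φ (∑ i : ↥s, c i • (i : E)) = ∑ i : ↥s, c i • φ (i : E) := by
    rw [map_sum]
    exact Finset.sum_congr rfl fun i _ => map_smul φ _ _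
  rw [h2]; exact h1

variable {X : Type*} [TopologicalSpace X]

/-- `hatP` is stable under multiplication by positive scalars. -/
theorem hatP_smul_mem {P : Set (VSp X)} {c : ℝ} (hc : 0 < c) {z : VSp X}
    (hz : z ∈ hatP P) : c • z ∈ hatP P := by
  have h1 : c • z ∈ (c • ·) '' closure (coneOf P) := ⟨z, hz, rfl⟩
  have h2 : (c • ·) '' closure (coneOf P) ⊆ closure ((c • ·) '' coneOf P) :=
    image_closure_subset_closure_image (continuous_const_smul c)
  refine closure_mono ?_ (h2 h1)
  rintro y ⟨x, ⟨c', hc', p, hp, rfl⟩, rfl⟩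
  exact ⟨c * c', mul_nonneg hc.le hc', p, hp, smul_smul c c' p⟩

theorem P_subset_hatP {P : Set (VSp X)} : P ⊆ hatP P := fun p hp =>
  subset_closure ⟨1, zero_le_one, p, hp, (one_smul ℝ p).symm⟩

end AuxLemmas

set_option maxHeartbeats 1600000 in
/-- **Remark.** Let `(X, P)` be a Kelvin–Planck theory.  If `(v, w) ∈ V(X)` complies
with the Clausius–Duhem inequality for every Clausius–Duhem pair but is not a member
of `\hat P`, then there exists `ν ∈ M₊(X)` such that `(v, w + ν) ∈ \hat P`. -/
theorem exists_pos_correction_into_hatP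
    {X : Type*} [TopologicalSpace X] [CompactSpace X] [T2Space X]
    (P : Set (VSp X)) (hP : IsKelvinPlanck P)
    (v w : Meas X) (hv : v (1 : C(X, ℝ)) = 0)
    (hQ : ∀ η T β : C(X, ℝ), IsCDPair P η T → (∀ x, β x = (T x)⁻¹) →
      w β ≤ v η)
    (hnot : ((v, w) : VSp X) ∉ hatP P) :
    ∃ ν ∈ PosMeas X, ((v, w + ν) : VSp X) ∈ hatP P := by
  classical
  by_contra hcon
  push_neg at hcon
  -- (0,0) belongs to `hatP P`
  have h00 : ((0, 0) : VSp X) ∈ hatP P := by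
    have h : ((0, 0) : VSp X) ∈ hatP P ∩ (({0} : Set (Meas X)) ×ˢ PosMeas X) := by
      rw [hP.2]; exact rfl
    exact h.1
  -- the state space is nonempty
  rcases isEmpty_or_nonempty X with hX | hX
  · -- `C(X, ℝ)` is trivial, so `v = 0` and `w = 0` and `(v,w) ∈ hatP P`
    have hsub : Subsingleton C(X, ℝ) :=
      ⟨fun f g => ContinuousMap.ext fun x => (IsEmpty.false x).elim⟩
    have hv0 : v = 0 := ContinuousLinearMap.ext fun f => by
      rw [Subsingleton.elim f 0]; exact (map_zero (v : C(X, ℝ) →L[ℝ] ℝ))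
    have hw0 : w = 0 := ContinuousLinearMap.ext fun f => by
      rw [Subsingleton.elim f 0]; exact (map_zero (w : C(X, ℝ) →L[ℝ] ℝ))
    exact hnot (by rw [hv0, hw0]; exact h00)
  obtain ⟨x₀⟩ := hX
  -- the compact convex set `Π` of "probability measures"
  set Pi : Set (Meas X) := closure (convexHull ℝ (Set.range (dirac (X := X)))) with hPi
  have hdirac_apply : ∀ (x : X) (f : C(X, ℝ)), dirac x f = f x := fun _ _ => rfl
  have hball : Set.range (dirac (X := X)) ⊆
      WeakDual.toStrongDual ⁻¹' Metric.closedBall 0 1 := by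
    rintro _ ⟨x, rfl⟩
    simp only [Set.mem_preimage, Metric.mem_closedBall]
    refine (dist_zero_right (WeakDual.toStrongDual (dirac x) : StrongDual ℝ C(X, ℝ))).le.trans ?_
    refine ContinuousLinearMap.opNorm_le_bound _ zero_le_one fun f => ?_
    rw [one_mul]
    exact (ContinuousMap.norm_coe_le_norm f x)
  have hballconv : Convex ℝ (WeakDual.toStrongDual ⁻¹'
      Metric.closedBall (0 : StrongDual ℝ C(X, ℝ)) 1) :=
    (convex_closedBall (0 : StrongDual ℝ C(X, ℝ)) 1).linear_preimage (WeakDual.toStrongDual (𝕜 := ℝ) (E := C(X, ℝ))).toLinearMap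
  have hPicomp : IsCompact Pi := by
    refine IsCompact.of_isClosed_subset (WeakDual.isCompact_closedBall (𝕜 := ℝ) (E := C(X, ℝ)) 0 1)
      isClosed_closure ?_
    exact closure_minimal (convexHull_min hball hballconv)
      (WeakDual.isClosed_closedBall (𝕜 := ℝ) (E := C(X, ℝ)) 0 1)
  have hPiconv : Convex ℝ Pi := (convex_convexHull ℝ _).closure
  -- `Pi ⊆ PosMeas ∩ {π | π 1 = 1}`
  have hPos_closed : IsClosed (PosMeas X) := by
    have : PosMeas X = ⋂ (f : C(X, ℝ)) (_ : ∀ x, 0 ≤ f x),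
        (fun μ : Meas X => μ f) ⁻¹' Set.Ici 0 := by
      ext μ; simp [PosMeas]
    rw [this]
    exact isClosed_iInter fun f => isClosed_iInter fun _ =>
      IsClosed.preimage (WeakDual.eval_continuous f) isClosed_Ici
  have hPos_convex : Convex ℝ (PosMeas X) := by
    intro μ hμ ν hν a b ha hb _
    intro f hf
    have : (a • μ + b • ν) f = a * μ f + b * ν f := rfl
    rw [this]
    exact add_nonneg (mul_nonneg ha (hμ f hf)) (mul_nonneg hb (hν f hf))
  have hPisub : Pi ⊆ PosMeas X ∩ {π : Meas X | π 1 = 1} := by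
    refine closure_minimal (convexHull_min ?_ ?_) ?_
    · rintro _ ⟨x, rfl⟩
      refine ⟨fun f hf => ?_, ?_⟩
      · exact hf x
      · simp [hdirac_apply]
    · refine hPos_convex.inter ?_
      intro μ hμ ν hν a b ha hb hab
      have : (a • μ + b • ν) (1 : C(X, ℝ)) = a * μ 1 + b * ν 1 := rfl
      simp only [Set.mem_setOf_eq] at hμ hν ⊢
      rw [this, hμ, hν, mul_one, mul_one, hab]
    · refine hPos_closed.inter ?_
      exact IsClosed.preimage (WeakDual.eval_continuous 1) (isClosed_singleton (x := (1:ℝ)))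
  have hdiracPi : ∀ x : X, dirac x ∈ Pi := fun x =>
    subset_closure (subset_convexHull ℝ _ ⟨x, rfl⟩)
  -- base set and the join with the point (v, w)
  set base : Set (VSp X) := ({0} : Set (Meas X)) ×ˢ Pi with hbase
  have hbasecomp : IsCompact base := isCompact_singleton.prod hPicomp
  have hbaseconv : Convex ℝ base := (convex_singleton _).prod hPiconv
  set J : ℝ × VSp X → VSp X :=
    fun tc => (1 - tc.1) • ((v, w) : VSp X) + tc.1 • tc.2 with hJ
  have hJcont : Continuous J := by
    exact ((continuous_const.sub continuous_fst).smul continuous_const).add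
      (continuous_fst.smul continuous_snd)
  set s : Set (VSp X) := J '' (Set.Icc (0:ℝ) 1 ×ˢ base) with hs
  have hscomp : IsCompact s := ((isCompact_Icc).prod hbasecomp).image hJcont
  have hsconv : Convex ℝ s := by
    rintro z₁ ⟨⟨t₁, c₁⟩, ⟨ht₁, hc₁⟩, rfl⟩ z₂ ⟨⟨t₂, c₂⟩, ⟨ht₂, hc₂⟩, rfl⟩ a b ha hb hab
    set t : ℝ := a * t₁ + b * t₂ with htdef
    have ht : t ∈ Set.Icc (0:ℝ) 1 := by
      constructor
      · exact add_nonneg (mul_nonneg ha ht₁.1) (mul_nonneg hb ht₂.1)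
      · calc a * t₁ + b * t₂ ≤ a * 1 + b * 1 := by
              gcongr <;> [exact ht₁.2; exact ht₂.2]
          _ = 1 := by rw [mul_one, mul_one, hab]
    rcases eq_or_lt_of_le ht.1 with ht0 | ht0
    · -- t = 0 : the combination equals (v, w)
      have ht₁0 : a * t₁ = 0 ∧ b * t₂ = 0 := by
        constructor <;> nlinarith [mul_nonneg ha ht₁.1, mul_nonneg hb ht₂.1]
      refine ⟨(0, c₁), ⟨⟨le_rfl, zero_le_one⟩, hc₁⟩, ?_⟩
      simp only [hJ]
      have h1 : a • ((1 - t₁) • ((v, w) : VSp X) + t₁ • c₁) +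
          b • ((1 - t₂) • ((v, w) : VSp X) + t₂ • c₂)
          = (a * (1 - t₁) + b * (1 - t₂)) • ((v, w) : VSp X)
            + (a * t₁) • c₁ + (b * t₂) • c₂ := by
        module
      rw [h1, ht₁0.1, ht₁0.2, zero_smul, zero_smul, add_zero, add_zero]
      have : a * (1 - t₁) + b * (1 - t₂) = 1 := by
        have := ht0.symm
        simp only [htdef] at this
        nlinarith
      rw [this]
      simp
    · -- t > 0
      set cc : VSp X := (a * t₁ / t) • c₁ + (b * t₂ / t) • c₂ with hcc
      have hccbase : cc ∈ base := by
        refine hbaseconv hc₁ hc₂ (div_nonneg (mul_nonneg ha ht₁.1) ht0.le)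
          (div_nonneg (mul_nonneg hb ht₂.1) ht0.le) ?_
        field_simp
        exact htdef.symm
      refine ⟨(t, cc), ⟨⟨ht.1, ht.2⟩, hccbase⟩, ?_⟩
      simp only [hJ, hcc]
      have h2 : t • ((a * t₁ / t) • c₁ + (b * t₂ / t) • c₂)
          = (a * t₁) • c₁ + (b * t₂) • c₂ := by
        rw [smul_add, smul_smul, smul_smul]
        congr 2 <;> field_simp
      rw [h2]
      have h3 : (1 - t) • ((v, w) : VSp X) = (a * (1 - t₁) + b * (1 - t₂)) • ((v, w) : VSp X) := by
        congr 1
        simp only [htdef]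
        nlinarith
      rw [h3]
      module
  -- membership facts for s
  have hvw_mem : ((v, w) : VSp X) ∈ s := by
    refine ⟨((0:ℝ), ((0 : Meas X), dirac x₀)), ⟨⟨le_rfl, zero_le_one⟩, ⟨rfl, hdiracPi x₀⟩⟩, ?_⟩
    simp [hJ]
  have hdirac_mem : ∀ x : X, ((0, dirac x) : VSp X) ∈ s := by
    intro x
    refine ⟨((1:ℝ), ((0 : Meas X), dirac x)), ⟨⟨zero_le_one, le_rfl⟩, ⟨rfl, hdiracPi x⟩⟩, ?_⟩
    simp [hJ]
  -- disjointness of s and hatP P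
  have hdisj : Disjoint s (hatP P) := by
    rw [Set.disjoint_left]
    rintro z ⟨⟨t, c⟩, ⟨⟨ht0, ht1⟩, hcb⟩, rfl⟩ hzP
    obtain ⟨hc1, hc2⟩ : c.1 ∈ ({0} : Set (Meas X)) ∧ c.2 ∈ Pi := ⟨hcb.1, hcb.2⟩
    have hπ := hPisub hc2
    rcases eq_or_lt_of_le ht1 with ht1' | ht1'
    · -- t = 1
      have hz : J (t, c) = ((0 : Meas X), c.2) := by
        have ht1'' : t = 1 := ht1'
        have hc0 : c = ((0 : Meas X), c.2) := Prod.ext (Set.eq_of_mem_singleton hc1) rfl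
        simp only [hJ]
        rw [ht1'', hc0]
        norm_num
      rw [hz] at hzP
      have hmem : ((0 : Meas X), c.2) ∈ hatP P ∩ (({0} : Set (Meas X)) ×ˢ PosMeas X) :=
        ⟨hzP, rfl, hπ.1⟩
      rw [hP.2] at hmem
      have : c.2 = 0 := congrArg Prod.snd hmem
      have h1 : c.2 (1 : C(X, ℝ)) = 1 := hπ.2
      have h0 : (0 : Meas X) (1 : C(X, ℝ)) = 0 := rfl
      rw [this, h0] at h1
      exact zero_ne_one h1
    · -- t < 1
      have h1t : 0 < 1 - t := by linarith
      have hscaled := hatP_smul_mem (c := (1 - t)⁻¹) (by positivity) hzP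
      set ν : Meas X := ((1 - t)⁻¹ * t) • c.2 with hν
      have hznu : (1 - t)⁻¹ • J (t, c) = ((v, w + ν) : VSp X) := by
        have hc0 : c.1 = 0 := Set.eq_of_mem_singleton hc1
        have hcsplit : c = ((0 : Meas X), c.2) := Prod.ext hc0 rfl
        apply Prod.ext
        · show (1 - t)⁻¹ • ((1 - t) • ((v, w) : VSp X) + t • c).1 = v
          rw [hcsplit]
          show (1 - t)⁻¹ • ((1 - t) • v + t • (0 : Meas X)) = v
          rw [smul_zero, add_zero, smul_smul, inv_mul_cancel₀ h1t.ne', one_smul]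
        · show (1 - t)⁻¹ • ((1 - t) • ((v, w) : VSp X) + t • c).2 = w + ν
          rw [hcsplit]
          show (1 - t)⁻¹ • ((1 - t) • w + t • c.2) = w + ν
          rw [smul_add, smul_smul, smul_smul, inv_mul_cancel₀ h1t.ne', one_smul, hν]
      rw [hznu] at hscaled
      have hνpos : ν ∈ PosMeas X := by
        intro f hf
        have : ν f = ((1 - t)⁻¹ * t) * c.2 f := rfl
        rw [this]
        exact mul_nonneg (by positivity) (hπ.1 f hf)
      exact hcon ν hνpos hscaled
  -- separation
  obtain ⟨f, u, v₀, hfs, huv, hfP⟩ :=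
    geometric_hahn_banach_compact_closed hsconv hscomp hP.1.2 isClosed_closure hdisj
  -- v₀ < 0 from (0,0) ∈ hatP P and f nonnegative on hatP P
  have hv₀ : v₀ < 0 := by
    have := hfP _ h00
    have h0' : ((0, 0) : VSp X) = 0 := rfl
    rw [h0', map_zero] at this
    simpa using this
  have hfP0 : ∀ z ∈ hatP P, 0 ≤ f z := by
    intro z hz
    by_contra hneg
    push_neg at hneg
    have hcpos : 0 < 2 * v₀ / f z := div_pos_iff.2 (Or.inr ⟨by linarith, hneg⟩)
    have := hfP _ (hatP_smul_mem hcpos hz)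
    rw [map_smul, smul_eq_mul, div_mul_eq_mul_div, mul_div_assoc,
      div_self hneg.ne, mul_one] at this
    linarith
  -- decompose f into its two components and represent by continuous functions
  obtain ⟨η, hη⟩ := WeakDual.exists_eval
    (f.comp (ContinuousLinearMap.inl ℝ (Meas X) (Meas X)))
  obtain ⟨β, hβ⟩ := WeakDual.exists_eval
    (f.comp (ContinuousLinearMap.inr ℝ (Meas X) (Meas X)))
  have hf_eq : ∀ z : VSp X, f z = z.1 η + z.2 β := by
    rintro ⟨z1, z2⟩
    show f (z1, z2) = z1 η + z2 β
    have h : ((z1, z2) : VSp X) = (z1, 0) + (0, z2) := by simp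
    rw [h, map_add]
    have e1 : f ((z1 : Meas X), (0 : Meas X)) = z1 η := hη z1
    have e2 : f ((0 : Meas X), (z2 : Meas X)) = z2 β := hβ z2
    rw [e1, e2]
  -- β is strictly negative
  have hβneg : ∀ x : X, β x < 0 := by
    intro x
    have := hfs _ (hdirac_mem x)
    rw [hf_eq] at this
    simp only [ContinuousLinearMap.zero_apply] at this
    have h2 : (dirac x) β = β x := rfl
    have h3 : (0 : Meas X) η = 0 := rfl
    rw [h2, h3, zero_add] at this
    linarith
  -- construct Clausius–Duhem pair
  set β₀ : C(X, ℝ) := -β with hβ₀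
  have hβ₀pos : ∀ x : X, 0 < β₀ x := fun x => by
    simp only [hβ₀, ContinuousMap.neg_apply]
    linarith [hβneg x]
  set T₀ : C(X, ℝ) := ⟨fun x => (β₀ x)⁻¹,
    Continuous.inv₀ β₀.continuous fun x => (hβ₀pos x).ne'⟩ with hT₀
  have hT₀pos : ∀ x : X, 0 < T₀ x := fun x => by
    simp only [hT₀, ContinuousMap.coe_mk]
    exact inv_pos.2 (hβ₀pos x)
  have hCD : IsCDPair P η T₀ := by
    refine ⟨hT₀pos, fun β' hβ' p hp => ?_⟩
    have hβ'β : β' = β₀ := by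
      ext x
      rw [hβ' x]
      simp only [hT₀, ContinuousMap.coe_mk]
      exact inv_inv _
    rw [hβ'β]
    have h0 := hfP0 p (P_subset_hatP hp)
    rw [hf_eq] at h0
    have : p.2 β₀ = -(p.2 β) := by
      rw [hβ₀, map_neg]
    rw [this]
    linarith
  have hQineq := hQ η T₀ β₀ hCD (fun x => by
    simp only [hT₀, ContinuousMap.coe_mk]
    exact (inv_inv _).symm)
  -- contradiction from f(v,w) < 0
  have hvw := hfs _ hvw_mem
  rw [hf_eq] at hvw
  have hwβ₀ : w β₀ = -(w β) := by rw [hβ₀, map_neg]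
  rw [hwβ₀] at hQineq
  simp only at hvw
  linarith
end
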